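/- Let n ≥ 2 be a natural number and let λ > 0, λ_e > 0, c > 0 be real numbers. Let v : ℕ → ℝ satisfy, for every j with 1 ≤ j ≤ n, the recursion v(j) = (λ_e + j(n−j)·(λ/(c·ln n))·v(j+1)) / (j·λ/n + j·λ/(c·ln n) + j(n−j)·λ/(c·ln n)). Then v(1) ≤ c·λ_e·(ln n)²/(λ·n) + c·λ_e·ln n/(λ·n) + c·λ_e·ln n/(n·λ·(n + c·ln n)). -/

import Mathlib

lemma harm_le (m : ℕ) (hm : 1 ≤ m) :
    (∑ i ∈ Finset.Ico 1 (m + 1), (1 : ℝ) / i) ≤ 1 + Real.log m := by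
  induction m with
  | zero => omega
  | succ k ih =>
    rcases Nat.lt_or_ge k 1 with h | hk
    · interval_cases k
      norm_num [Finset.sum_Ico_succ_top]
    · have hks : (1:ℕ) ≤ k + 1 := by omega
      rw [Finset.sum_Ico_succ_top hks]
      have h1 : (∑ i ∈ Finset.Ico 1 (k+1), (1:ℝ)/i) ≤ 1 + Real.log k := ih hk
      have hkpos : (0:ℝ) < k := by exact_mod_cast hk
      have hlog : Real.log k + 1/((k:ℝ)+1) ≤ Real.log ((k:ℝ)+1) := by
        have hx : (0:ℝ) < (k:ℝ)/((k:ℝ)+1) := by positivity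
        have h2 := Real.log_le_sub_one_of_pos hx
        rw [Real.log_div (ne_of_gt hkpos) (by positivity)] at h2
        have e : ((k:ℝ))/((k:ℝ)+1) - 1 = -(1/((k:ℝ)+1)) := by
          field_simp
          ring
        linarith
      push_cast
      linarith

set_option maxHeartbeats 1000000 in
/-- Upper bound on the average version age of a single node in a disconnected
gossip network with contact-mobility scaling `f(n) = c·ln n`. -/
theorem stmt_3 (n : ℕ) (hn : 2 ≤ n) (lam lamE c : ℝ) (hlam : 0 < lam) (hlamE : 0 < lamE)
    (hc : 0 < c) (v : ℕ → ℝ)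
    (hv : ∀ j : ℕ, 1 ≤ j → j ≤ n →
      v j = (lamE + (j : ℝ) * ((n : ℝ) - j) * (lam / (c * Real.log n)) * v (j + 1)) /
        ((j : ℝ) * lam / n + (j : ℝ) * lam / (c * Real.log n)
          + (j : ℝ) * ((n : ℝ) - j) * lam / (c * Real.log n))) :
    v 1 ≤ c * lamE * (Real.log n) ^ 2 / (lam * n)
        + c * lamE * Real.log n / (lam * n)
        + c * lamE * Real.log n / ((n : ℝ) * lam * ((n : ℝ) + c * Real.log n)) := by
  have hnR : (2:ℝ) ≤ n := by exact_mod_cast hn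
  have hn0 : (0:ℝ) < n := by linarith
  set L := Real.log n with hLdef
  clear_value L
  have hL : 0 < L := by rw [hLdef]; exact Real.log_pos (by exact_mod_cast hn)
  have hcL : 0 < c * L := by positivity
  set K := lamE * (c * L) / lam with hKdef
  clear_value K
  have hK : 0 < K := by rw [hKdef]; positivity
  -- value at j = n
  have hvn : v n = c * lamE * L / (lam * ((n:ℝ) + c * L)) := by
    have h := hv n (by omega) le_rfl
    rw [sub_self] at h
    rw [h]
    rw [show (n:ℝ) * 0 * (lam / (c*L)) * v (n+1) = 0 by ring,
        show (n:ℝ) * 0 * lam / (c*L) = 0 by ring]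
    rw [add_zero, add_zero]
    field_simp
    ring
  have hvnpos : 0 < v n := by rw [hvn]; positivity
  have base : 0 ≤ v n ∧
      v n * ((n:ℝ) - (n:ℕ) + 1) ≤ K * (∑ i ∈ Finset.Ico n n, (1:ℝ)/i) + v n := by
    rw [Finset.Ico_self, Finset.sum_empty, sub_self]
    exact ⟨le_of_lt hvnpos, by simp⟩
  -- downward induction on j (via induction on n - j)
  have main : ∀ k : ℕ, ∀ j : ℕ, 1 ≤ j → j ≤ n → n - j ≤ k →
      0 ≤ v j ∧ v j * ((n:ℝ) - j + 1) ≤ K * (∑ i ∈ Finset.Ico j n, (1:ℝ)/i) + v n := by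
    intro k
    induction k with
    | zero =>
      intro j hj1 hjn hjk
      have hjeq : j = n := by omega
      subst hjeq
      exact base
    | succ k ih =>
      intro j hj1 hjn hjk
      rcases Nat.eq_or_lt_of_le hjn with heq | hlt
      · subst heq
        exact base
      · obtain ⟨ih0, ihB⟩ := ih (j+1) (by omega) (by omega) (by omega)
        have vj_eq := hv j hj1 (le_of_lt hlt)
        have eM : (n:ℝ) - ((j+1:ℕ):ℝ) + 1 = (n:ℝ) - (j:ℝ) := by push_cast; ring
        rw [eM] at ihB
        set J := (j:ℝ) with hJdef
        set M := (n:ℝ) - J with hMdef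
        set D := J * lam / (n:ℝ) + J * lam / (c*L) + J * M * lam / (c*L) with hDdef
        set v' := v (j+1) with hv'def
        set H' := (∑ i ∈ Finset.Ico (j+1) n, (1:ℝ)/i) with hH'def
        clear_value J M D v' H'
        have hJ1 : (1:ℝ) ≤ J := by rw [hJdef]; exact_mod_cast hj1
        have hJ0 : (0:ℝ) < J := by linarith
        have hM1 : (1:ℝ) ≤ M := by
          rw [hMdef, hJdef]
          have : (j:ℝ) + 1 ≤ n := by exact_mod_cast hlt
          linarith
        have hM0 : (0:ℝ) < M := by linarith
        have hD1 : (0:ℝ) < J * lam / n := by positivity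
        have hD3 : (0:ℝ) < J * M * lam / (c*L) :=
          div_pos (mul_pos (mul_pos hJ0 hM0) hlam) hcL
        have hDpos : 0 < D := by
          have h2 : (0:ℝ) < J * lam / (c*L) := by positivity
          rw [hDdef]
          linarith
        have hnum : 0 ≤ lamE + J * M * (lam/(c*L)) * v' := by
          have h3 : 0 ≤ J * M * (lam/(c*L)) * v' := by
            apply mul_nonneg _ ih0
            apply mul_nonneg (mul_nonneg (le_of_lt hJ0) (le_of_lt hM0))
            positivity
          linarith
        constructor
        · rw [vj_eq]
          exact div_nonneg hnum (le_of_lt hDpos)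
        · have hsplit : v j * (M + 1)
              = lamE * (M+1) / D + (J * M * (lam/(c*L)) * (M+1) / D) * v' := by
            rw [vj_eq]; ring
          have hDge : J * (lam/(c*L)) * (M+1) ≤ D := by
            have e : D = J * lam / n + J * (lam/(c*L)) * (M+1) := by
              rw [hDdef]; ring
            rw [e]; linarith
          have hM1pos : (0:ℝ) < M + 1 := by linarith
          have hden : 0 < J * (lam/(c*L)) * (M+1) := by
            apply mul_pos (mul_pos hJ0 (by positivity)) hM1pos
          have key1 : lamE * (M+1) / D ≤ K * (1/J) := by
            have h1 : lamE * (M+1) / D ≤ lamE * (M+1) / (J * (lam/(c*L)) * (M+1)) :=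
              div_le_div_of_nonneg_left (by positivity) hden hDge
            have h2 : lamE * (M+1) / (J * (lam/(c*L)) * (M+1)) = K * (1/J) := by
              rw [hKdef]
              field_simp
            linarith
          have key2 : (J * M * (lam/(c*L)) * (M+1) / D) * v' ≤ M * v' := by
            apply mul_le_mul_of_nonneg_right _ ih0
            rw [div_le_iff₀ hDpos]
            have e : M * D - J * M * (lam/(c*L)) * (M+1) = M * (J * lam / n) := by
              rw [hDdef]; ring
            nlinarith [mul_nonneg (le_of_lt hM0) (le_of_lt hD1)]
          have hMv : M * v' ≤ K * H' + v n := by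
            rw [mul_comm]; exact ihB
          have hHsum : (∑ i ∈ Finset.Ico j n, (1:ℝ)/i) = 1/J + H' := by
            rw [hH'def, hJdef]
            exact Finset.sum_eq_sum_Ico_succ_bot hlt _
          rw [hHsum]
          have hexp : K * (1/J + H') = K * (1/J) + K * H' := by ring
          linarith
  obtain ⟨-, hmain⟩ := main n 1 le_rfl (by omega) (by omega)
  have e1 : (n:ℝ) - ((1:ℕ):ℝ) + 1 = n := by push_cast; ring
  rw [e1] at hmain
  have hHn : (∑ i ∈ Finset.Ico 1 n, (1:ℝ)/i) ≤ 1 + L := by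
    have h1 := harm_le (n-1) (by omega)
    have e : (n-1) + 1 = n := by omega
    rw [e] at h1
    have hlog : Real.log ((n-1:ℕ):ℝ) ≤ L := by
      rw [hLdef]
      apply Real.log_le_log (by exact_mod_cast (by omega : 1 ≤ n - 1) : (0:ℝ) < ((n-1:ℕ):ℝ))
      exact_mod_cast Nat.sub_le n 1
    linarith
  have hfin : v 1 * n ≤ K * (1 + L) + v n := by
    have h2 := mul_le_mul_of_nonneg_left hHn (le_of_lt hK)
    linarith
  have hstep : v 1 ≤ (K * (1 + L) + v n) / n := (le_div_iff₀ hn0).2 hfin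
  refine le_trans hstep (le_of_eq ?_)
  rw [hvn, hKdef]
  have hnc : (0:ℝ) < (n:ℝ) + c*L := by positivity
  field_simp
  ring
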